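/- Let H be a complex Hilbert space, let f be a nonzero bounded linear operator on H, and let ξ ∈ H be a unit vector satisfying (f ∘ f*) ξ = ‖f‖² ξ. Define ℘(g) = ⟨ξ, g (f* ξ)⟩ / ‖f‖ for bounded operators g on H. Then for every self-adjoint bounded operator k on H and every bounded operator u on H, Re ℘( i(k f − f k) + (u* f − f u*) u + u* (f u − u f) ) ≤ 0. -/

import Mathlib

/-- The key dissipativity estimate showing that the negative of a one-term Lindblad
generator `f ↦ i[k,f] + [u*,f]u + u*[f,u]` is accretive: the norming functional
`℘ g = ⟨ξ, g (f* ξ)⟩ / ‖f‖` satisfies `Re ℘(i[k,f] + [u*,f]u + u*[f,u]) ≤ 0` for every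
self-adjoint `k` and every bounded operator `u`. -/
theorem norming_functional_dissipative
    {H : Type*} [NormedAddCommGroup H] [InnerProductSpace ℂ H] [CompleteSpace H]
    (f : H →L[ℂ] H) (hf : f ≠ 0) (ξ : H) (hξ : ‖ξ‖ = 1)
    (heig : f (ContinuousLinearMap.adjoint f ξ) = ((‖f‖ ^ 2 : ℝ) : ℂ) • ξ)
    (℘ : (H →L[ℂ] H) → ℂ)
    (h℘ : ∀ g : H →L[ℂ] H,
      ℘ g = (inner ℂ ξ (g (ContinuousLinearMap.adjoint f ξ)) : ℂ) / (‖f‖ : ℂ))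
    (k : H →L[ℂ] H) (hk : ContinuousLinearMap.adjoint k = k) (u : H →L[ℂ] H) :
    (℘ (Complex.I • (k * f - f * k)
        + (ContinuousLinearMap.adjoint u * f - f * ContinuousLinearMap.adjoint u) * u
        + ContinuousLinearMap.adjoint u * (f * u - u * f))).re ≤ 0 := by
  set F := ContinuousLinearMap.adjoint f ξ with hF
  have hfpos : (0:ℝ) < ‖f‖ := norm_pos_iff.mpr hf
  rw [h℘]
  have expand : (inner ℂ ξ ((Complex.I • (k * f - f * k)
        + (ContinuousLinearMap.adjoint u * f - f * ContinuousLinearMap.adjoint u) * u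
        + ContinuousLinearMap.adjoint u * (f * u - u * f)) F) : ℂ)
      = Complex.I * (((‖f‖^2:ℝ):ℂ) * inner ℂ ξ (k ξ) - inner ℂ F (k F))
        + (2 * inner ℂ (u ξ) (f (u F)) - inner ℂ (u F) (u F)
          - ((‖f‖^2:ℝ):ℂ) * inner ℂ (u ξ) (u ξ)) := by
    simp only [ContinuousLinearMap.add_apply, ContinuousLinearMap.sub_apply,
      ContinuousLinearMap.smul_apply, ContinuousLinearMap.mul_apply, heig, map_smul,
      inner_add_right, inner_sub_right, inner_smul_right,
      ContinuousLinearMap.adjoint_inner_right]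
    rw [show (inner ℂ ξ (f (k F)) : ℂ) = inner ℂ F (k F) by
      rw [← ContinuousLinearMap.adjoint_inner_left, ← hF]]
    rw [show (inner ℂ ξ (f ((ContinuousLinearMap.adjoint u) (u F))) : ℂ)
        = inner ℂ (u F) (u F) by
      rw [← ContinuousLinearMap.adjoint_inner_left, ← hF,
        ContinuousLinearMap.adjoint_inner_right]]
    ring
  rw [expand]
  have hkξ : (inner ℂ ξ (k ξ) : ℂ).im = 0 := by
    rw [← Complex.conj_eq_iff_im, inner_conj_symm, ← ContinuousLinearMap.adjoint_inner_right, hk]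
  have hkF : (inner ℂ F (k F) : ℂ).im = 0 := by
    rw [← Complex.conj_eq_iff_im, inner_conj_symm, ← ContinuousLinearMap.adjoint_inner_right, hk]
  have huF : (inner ℂ (u F) (u F) : ℂ) = ((‖u F‖^2 : ℝ) : ℂ) := by
    rw [inner_self_eq_norm_sq_to_K]; norm_cast
  have huξ : (inner ℂ (u ξ) (u ξ) : ℂ) = ((‖u ξ‖^2 : ℝ) : ℂ) := by
    rw [inner_self_eq_norm_sq_to_K]; norm_cast
  rw [huF, huξ, Complex.div_ofReal_re]
  apply div_nonpos_of_nonpos_of_nonneg _ hfpos.le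
  have hb : (inner ℂ (u ξ) (f (u F)) : ℂ).re ≤ ‖u ξ‖ * (‖f‖ * ‖u F‖) := by
    refine (re_inner_le_norm (𝕜 := ℂ) _ _).trans ?_
    exact mul_le_mul_of_nonneg_left (f.le_opNorm _) (norm_nonneg _)
  simp only [Complex.add_re, Complex.mul_re, Complex.sub_re, Complex.sub_im,
    Complex.mul_im, Complex.I_re, Complex.I_im, Complex.ofReal_re, Complex.ofReal_im,
    hkξ, hkF, Complex.re_ofNat, Complex.im_ofNat]
  nlinarith [sq_nonneg (‖u F‖ - ‖f‖ * ‖u ξ‖), norm_nonneg (u F), norm_nonneg (u ξ), hfpos]
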